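/- Union bound for unique shortest paths with random edge weights: let G = (V, E) be a graph on n vertices whose edge weights are independent random variables, each drawn from a discrete distribution whose maximum point mass is at most n^{-5}. Then with probability at least 1 − 1/n, for every pair (s,t) and every two distinct neighbors u, v of s, w(s,u) + dist(u,t) ≠ w(s,v) + dist(v,t), where dist is the shortest-path distance. -/

import Mathlib

open MeasureTheory ProbabilityTheory

/-- Cost of a walk given as a list of vertices: sum of edge weights of consecutive pairs. -/
def walkCost {V : Type*} (w : V → V → ℝ) : List V → ℝ
  | [] => 0
  | [_] => 0
  | a :: b :: rest => w a b + walkCost w (b :: rest)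

/-- `IsWalk E s t l` : `l` is a walk from `s` to `t` using edges of `E`. -/
def IsWalk {V : Type*} (E : V → V → Prop) (s t : V) : List V → Prop
  | [] => False
  | [a] => a = s ∧ a = t
  | a :: b :: rest => a = s ∧ E a b ∧ IsWalk E b t (b :: rest)

/-- Shortest-path distance: infimum of costs of walks from `s` to `t`. -/
noncomputable def gDist {V : Type*} (E : V → V → Prop) (w : V → V → ℝ) (s t : V) : ℝ :=
  sInf (walkCost w '' {l | IsWalk E s t l})

namespace USP

variable {V : Type*} {E : V → V → Prop} {w : V → V → ℝ}

theorem walkCost_nil (w : V → V → ℝ) : walkCost w ([]) = 0 := rfl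
theorem walkCost_single (w : V → V → ℝ) (a : V) : walkCost w ([a]) = 0 := rfl
theorem walkCost_cons (w : V → V → ℝ) (a b : V) (l : List V) :
    walkCost w (a :: b :: l) = w a b + walkCost w (b :: l) := rfl

theorem isWalk_single {s t a : V} : IsWalk E s t ([a]) ↔ a = s ∧ a = t := Iff.rfl
theorem isWalk_cons {s t a b : V} {l : List V} :
    IsWalk E s t (a :: b :: l) ↔ a = s ∧ E a b ∧ IsWalk E b t (b :: l) := Iff.rfl

theorem walkCost_append (w : V → V → ℝ) (a : V) (l₁ l₂ : List V) :
    walkCost w (l₁ ++ a :: l₂) = walkCost w (l₁ ++ [a]) + walkCost w (a :: l₂) := by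
  induction l₁ with
  | nil => simp [walkCost]
  | cons c l₁ ih =>
    cases l₁ with
    | nil =>
      cases l₂ with
      | nil => simp [walkCost]
      | cons d r => simp [walkCost_cons, walkCost_single]
    | cons d r =>
      have h1 : (c :: d :: r) ++ a :: l₂ = c :: ((d :: r) ++ a :: l₂) := rfl
      have h2 : (c :: d :: r) ++ [a] = c :: ((d :: r) ++ [a]) := rfl
      rw [h1, h2]
      have h3 : (d :: r) ++ a :: l₂ = d :: (r ++ a :: l₂) := rfl
      have h4 : (d :: r) ++ [a] = d :: (r ++ [a]) := rfl
      rw [h3, h4, walkCost_cons, walkCost_cons, ← h3, ← h4, ih]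
      ring

theorem isWalk_append (a : V) {s t : V} (l₁ l₂ : List V) :
    IsWalk E s t (l₁ ++ a :: l₂) ↔ IsWalk E s a (l₁ ++ [a]) ∧ IsWalk E a t (a :: l₂) := by
  induction l₁ generalizing s with
  | nil =>
    cases l₂ with
    | nil =>
      simp only [List.nil_append, isWalk_single]
      tauto
    | cons b r =>
      simp only [List.nil_append, isWalk_cons, isWalk_single]
      tauto
  | cons c l₁ ih =>
    cases l₁ with
    | nil =>
      cases l₂ with
      | nil =>
        simp only [List.cons_append, List.nil_append, isWalk_cons, isWalk_single]
        tauto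
      | cons b r =>
        simp only [List.cons_append, List.nil_append, isWalk_cons, isWalk_single]
        tauto
    | cons d r =>
      have h1 : (c :: d :: r) ++ a :: l₂ = c :: ((d :: r) ++ a :: l₂) := rfl
      have h2 : (c :: d :: r) ++ [a] = c :: ((d :: r) ++ [a]) := rfl
      rw [h1, h2]
      have h3 : ((d :: r) ++ a :: l₂) = d :: (r ++ a :: l₂) := rfl
      have h4 : ((d :: r) ++ [a]) = d :: (r ++ [a]) := rfl
      rw [h3, h4, isWalk_cons, isWalk_cons, ← h3, ← h4, ih]
      tauto

theorem walk_exists_cons {s t : V} {l : List V} (h : IsWalk E s t l) :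
    ∃ l', l = s :: l' := by
  cases l with
  | nil => exact absurd h id
  | cons a l' =>
    cases l' with
    | nil => exact ⟨[], by rw [h.1]⟩
    | cons b r => exact ⟨b :: r, by rw [h.1]⟩

theorem walk_exists_concat {s t : V} {l : List V} (h : IsWalk E s t l) :
    ∃ l', l = l' ++ [t] := by
  induction l generalizing s with
  | nil => exact absurd h id
  | cons a l' ih =>
    cases l' with
    | nil => exact ⟨[], by simp [h.2]⟩
    | cons b r =>
      obtain ⟨m, hm⟩ := ih h.2.2
      exact ⟨a :: m, by rw [List.cons_append, ← hm]⟩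

/-- Reachability via walks. -/
def Reach (E : V → V → Prop) (a b : V) : Prop := ∃ l, IsWalk E a b l

theorem Reach.refl (E : V → V → Prop) (a : V) : Reach E a a := ⟨[a], rfl, rfl⟩

theorem reach_of_edge {a b : V} (h : E a b) : Reach E a b :=
  ⟨[a, b], rfl, h, rfl, rfl⟩

theorem Reach.trans {a b c : V} (h1 : Reach E a b) (h2 : Reach E b c) : Reach E a c := by
  obtain ⟨l₁, hl₁⟩ := h1
  obtain ⟨l₂, hl₂⟩ := h2
  obtain ⟨p, rfl⟩ := walk_exists_concat hl₁
  obtain ⟨r, rfl⟩ := walk_exists_cons hl₂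
  exact ⟨p ++ b :: r, (isWalk_append b p r).2 ⟨hl₁, hl₂⟩⟩

theorem walk_reach_rev (hE : ∀ a b, E a b → E b a) :
    ∀ (l : List V) (a b : V), IsWalk E a b l → Reach E b a := by
  intro l
  induction l with
  | nil => intro a b h; exact absurd h id
  | cons x l' ih =>
    intro a b h
    cases l' with
    | nil => obtain ⟨rfl, rfl⟩ := h; exact Reach.refl E _
    | cons y r =>
      obtain ⟨rfl, hxy, hw⟩ := h
      exact (ih y b hw).trans (reach_of_edge (hE _ _ hxy))

theorem Reach.symm (hE : ∀ a b, E a b → E b a) {a b : V} (h : Reach E a b) : Reach E b a := by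
  obtain ⟨l, hl⟩ := h; exact walk_reach_rev hE l a b hl

theorem walk_concat {a b c : V} {l₁ l₂ : List V} (h1 : IsWalk E a b l₁) (h2 : IsWalk E b c l₂) :
    ∃ l, IsWalk E a c l ∧ walkCost w l = walkCost w l₁ + walkCost w l₂ := by
  obtain ⟨p, rfl⟩ := walk_exists_concat h1
  obtain ⟨r, rfl⟩ := walk_exists_cons h2
  exact ⟨p ++ b :: r, (isWalk_append b p r).2 ⟨h1, h2⟩, walkCost_append w b p r⟩

/-- Costs of walks starting at a vertex reachable from `u` are nonnegative, provided all
edges reachable from `u` have nonnegative weight. -/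
theorem walkCost_nonneg {u : V} (hw : ∀ a b, E a b → Reach E u a → 0 ≤ w a b) :
    ∀ (l : List V) (a c : V), Reach E u a → IsWalk E a c l → 0 ≤ walkCost w l := by
  intro l
  induction l with
  | nil => intro a c _ _; exact le_refl 0
  | cons x l' ih =>
    intro a c hua h
    cases l' with
    | nil => exact le_refl 0
    | cons y r =>
      obtain ⟨rfl, hxy, hwalk⟩ := h
      have hy : Reach E u y := hua.trans (reach_of_edge hxy)
      have := ih y c hy hwalk
      have := hw x y hxy hua
      rw [walkCost_cons]; linarith

/-! ### Edge-usage count -/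

/-- Indicator of a proposition. -/
noncomputable def ind (P : Prop) : ℕ := @ite _ P (Classical.propDecidable P) 1 0

theorem ind_pos {P : Prop} (h : P) : ind P = 1 := by simp [ind, h]
theorem ind_neg {P : Prop} (h : ¬ P) : ind P = 0 := by simp [ind, h]
theorem ind_le_one (P : Prop) : ind P ≤ 1 := by
  by_cases h : P
  · rw [ind_pos h]
  · rw [ind_neg h]; omega

/-- Number of traversals of the (undirected) edge `f` by a walk. -/
noncomputable def countF (f : Sym2 V) : List V → ℕ
  | [] => 0
  | [_] => 0
  | a :: b :: rest => ind (s(a, b) = f) + countF f (b :: rest)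

theorem countF_nil (f : Sym2 V) : countF f ([]) = 0 := rfl
theorem countF_single (f : Sym2 V) (a : V) : countF f ([a]) = 0 := rfl
theorem countF_cons (f : Sym2 V) (a b : V) (l : List V) :
    countF f (a :: b :: l) = ind (s(a, b) = f) + countF f (b :: l) := rfl

/-- The weight function induced by a symmetric weight assignment. -/
def wt (g : Sym2 V → ℝ) : V → V → ℝ := fun a b => g s(a, b)

/-- Update of a weight assignment at one edge (classical, no decidability needed). -/
noncomputable def upd (g : Sym2 V → ℝ) (f : Sym2 V) (y : ℝ) : Sym2 V → ℝ :=
  fun i => @ite _ (i = f) (Classical.propDecidable _) y (g i)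

theorem upd_same (g : Sym2 V → ℝ) (f : Sym2 V) (y : ℝ) : upd g f y f = y := by simp [upd]
theorem upd_of_ne {i f : Sym2 V} (h : i ≠ f) (g : Sym2 V → ℝ) (y : ℝ) : upd g f y i = g i := by
  simp [upd, h]
theorem upd_self (g : Sym2 V → ℝ) (f : Sym2 V) : upd g f (g f) = g := by
  funext i; by_cases h : i = f
  · subst h; simp [upd]
  · simp [upd, h]
theorem upd_upd (g : Sym2 V → ℝ) (f : Sym2 V) (y y' : ℝ) :
    upd (upd g f y) f y' = upd g f y' := by
  funext i; by_cases h : i = f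
  · subst h; simp [upd]
  · simp [upd, h]

theorem walkCost_wt_update (g : Sym2 V → ℝ) (f : Sym2 V) (y : ℝ) (l : List V) :
    walkCost (wt (upd g f y)) l = walkCost (wt g) l + (y - g f) * countF f l := by
  induction l with
  | nil => simp [walkCost_nil, countF_nil]
  | cons a l' ih =>
    cases l' with
    | nil => simp [walkCost_single, countF_single]
    | cons b r =>
      rw [walkCost_cons, walkCost_cons, countF_cons, ih]
      by_cases h : s(a, b) = f
      · rw [ind_pos h]
        have : wt (upd g f y) a b = y := by
          simp [wt, upd, h]
        rw [this]
        have : wt g a b = g f := by rw [wt, h]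
        rw [this]
        push_cast
        ring
      · rw [ind_neg h]
        have : wt (upd g f y) a b = wt g a b := by
          simp [wt, upd, h]
        rw [this]
        push_cast
        ring

theorem countF_pos_mem {p q : V} : ∀ {l : List V}, 1 ≤ countF (s(p, q)) l → p ∈ l ∧ q ∈ l := by
  intro l
  induction l with
  | nil => intro h; simp [countF_nil] at h
  | cons a l' ih =>
    cases l' with
    | nil => intro h; simp [countF_single] at h
    | cons b r =>
      intro h
      rw [countF_cons] at h
      by_cases hab : s(a, b) = s(p, q)
      · rw [Sym2.eq_iff] at hab
        rcases hab with ⟨rfl, rfl⟩ | ⟨rfl, rfl⟩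
        · exact ⟨List.mem_cons_self, List.mem_cons_of_mem _ List.mem_cons_self⟩
        · exact ⟨List.mem_cons_of_mem _ List.mem_cons_self, List.mem_cons_self⟩
      · rw [ind_neg hab] at h
        obtain ⟨hp, hq⟩ := ih (by omega)
        exact ⟨List.mem_cons_of_mem _ hp, List.mem_cons_of_mem _ hq⟩

theorem countF_le_one {p q : V} : ∀ {l : List V}, l.Nodup → countF (s(p, q)) l ≤ 1 := by
  intro l
  induction l with
  | nil => intro _; simp [countF_nil]
  | cons a l' ih =>
    cases l' with
    | nil => intro _; simp [countF_single]
    | cons b r =>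
      intro hnd
      have hnd' : (b :: r).Nodup := hnd.of_cons
      have hna : a ∉ b :: r := (List.nodup_cons.1 hnd).1
      rw [countF_cons]
      by_cases hab : s(a, b) = s(p, q)
      · rw [ind_pos hab]
        have h0 : countF (s(p, q)) (b :: r) = 0 := by
          by_contra h
          have h1 : 1 ≤ countF (s(p, q)) (b :: r) := Nat.one_le_iff_ne_zero.2 h
          obtain ⟨hp, hq⟩ := countF_pos_mem h1
          rw [Sym2.eq_iff] at hab
          rcases hab with ⟨rfl, rfl⟩ | ⟨rfl, rfl⟩
          · exact hna hp
          · exact hna hq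
        omega
      · rw [ind_neg hab]
        have := ih hnd'
        omega

theorem countF_eq_one_decomp {f : Sym2 V} : ∀ {l : List V}, countF f l = 1 →
    ∃ p a b m, l = p ++ a :: b :: m ∧ s(a, b) = f ∧
      countF f (p ++ [a]) = 0 ∧ countF f (b :: m) = 0 := by
  intro l
  induction l with
  | nil => intro h; simp [countF_nil] at h
  | cons a l' ih =>
    cases l' with
    | nil => intro h; simp [countF_single] at h
    | cons b r =>
      intro h
      rw [countF_cons] at h
      by_cases hab : s(a, b) = f
      · rw [ind_pos hab] at h
        refine ⟨[], a, b, r, rfl, hab, countF_single f a, by omega⟩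
      · rw [ind_neg hab] at h
        simp only [Nat.zero_add] at h
        obtain ⟨p', a', b', m', heq, hf, hpre, hsuf⟩ := ih h
        refine ⟨a :: p', a', b', m', by rw [List.cons_append, heq], hf, ?_, hsuf⟩
        cases p' with
        | nil =>
          simp only [List.nil_append] at heq
          have hba' : b = a' := by injection heq
          subst hba'
          have h2 : ([] : List V) ++ [a] ++ [b] = a :: b :: ([] : List V) := rfl
          show countF f (([] : List V) ++ [a] ++ [b]) = 0
          rw [h2, countF_cons, ind_neg hab, countF_single]
        | cons c p'' =>
          have hbc : b = c := by injection heq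
          subst hbc
          have : (a :: b :: p'') ++ [a'] = a :: b :: (p'' ++ [a']) := rfl
          rw [this, countF_cons, ind_neg hab]
          have : (b :: p'') ++ [a'] = b :: (p'' ++ [a']) := rfl
          rw [this] at hpre
          omega

/-! ### Nonnegative-weight world -/

theorem walkCost_mono {w w' : V → V → ℝ} (hle : ∀ a b, w a b ≤ w' a b) :
    ∀ l : List V, walkCost w l ≤ walkCost w' l := by
  intro l
  induction l with
  | nil => simp [walkCost_nil]
  | cons a l' ih =>
    cases l' with
    | nil => simp [walkCost_single]
    | cons b r =>
      rw [walkCost_cons, walkCost_cons]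
      exact add_le_add (hle a b) ih

theorem exists_dup_split : ∀ {l : List V}, ¬ l.Nodup →
    ∃ (p : List V) (c : V) (m s2 : List V), l = p ++ c :: (m ++ c :: s2) := by
  intro l
  induction l with
  | nil => intro h; exact absurd List.nodup_nil h
  | cons x xs ih =>
    intro h
    by_cases hx : x ∈ xs
    · obtain ⟨s1, t1, rfl⟩ := List.append_of_mem hx
      exact ⟨[], x, s1, t1, rfl⟩
    · have : ¬ xs.Nodup := fun hnd => h (List.nodup_cons.2 ⟨hx, hnd⟩)
      obtain ⟨p, c, m, s2, rfl⟩ := ih this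
      exact ⟨x :: p, c, m, s2, rfl⟩

variable {u : V}

theorem exists_nodup_walk_le {t : V} (hw : ∀ a b, E a b → Reach E u a → 0 ≤ w a b) :
    ∀ (N : ℕ) (l : List V) (a : V), l.length ≤ N → Reach E u a → IsWalk E a t l →
    ∃ l', IsWalk E a t l' ∧ l'.Nodup ∧ walkCost w l' ≤ walkCost w l := by
  intro N
  induction N with
  | zero =>
    intro l a hlen _ hwalk
    interval_cases hl : l.length
    · cases l with
      | nil => exact absurd hwalk id
      | cons x xs => simp at hl
  | succ N ih =>
    intro l a hlen hua hwalk
    by_cases hnd : l.Nodup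
    · exact ⟨l, hwalk, hnd, le_refl _⟩
    · obtain ⟨p, c, m, s2, rfl⟩ := exists_dup_split hnd
      have h1 := (isWalk_append c p (m ++ c :: s2)).1 hwalk
      obtain ⟨w1, w2⟩ := h1
      have hrw : c :: (m ++ c :: s2) = (c :: m) ++ c :: s2 := rfl
      rw [hrw] at w2
      have h2 := (isWalk_append c (c :: m) s2).1 w2
      obtain ⟨wmid, w3⟩ := h2
      have huc : Reach E u c := hua.trans ⟨p ++ [c], w1⟩
      have hmid_nonneg : 0 ≤ walkCost w ((c :: m) ++ [c]) :=
        walkCost_nonneg hw _ c c huc wmid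
      have hwalk'' : IsWalk E a t (p ++ c :: s2) := (isWalk_append c p s2).2 ⟨w1, w3⟩
      have hcost : walkCost w (p ++ c :: s2) ≤ walkCost w (p ++ c :: (m ++ c :: s2)) := by
        rw [walkCost_append w c p s2, walkCost_append w c p (m ++ c :: s2), hrw,
          walkCost_append w c (c :: m) s2]
        linarith
      have hlen' : (p ++ c :: s2).length ≤ N := by
        simp only [List.length_append, List.length_cons] at hlen ⊢
        omega
      obtain ⟨l', hl'w, hl'nd, hl'c⟩ := ih (p ++ c :: s2) a hlen' hua hwalk''
      exact ⟨l', hl'w, hl'nd, hl'c.trans hcost⟩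

theorem exists_nodup_walk {t a : V} (hw : ∀ a b, E a b → Reach E u a → 0 ≤ w a b)
    (hua : Reach E u a) {l : List V} (h : IsWalk E a t l) :
    ∃ l', IsWalk E a t l' ∧ l'.Nodup ∧ walkCost w l' ≤ walkCost w l :=
  exists_nodup_walk_le hw l.length l a (le_refl _) hua h

section Fin
variable [Fintype V]

theorem nodup_lists_finite : {l : List V | l.Nodup}.Finite :=
  (List.finite_length_le V (Fintype.card V)).subset fun _ hl => hl.length_le_card

theorem gDist_bddBelow {t a : V} (hw : ∀ a b, E a b → Reach E u a → 0 ≤ w a b)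
    (hua : Reach E u a) : BddBelow (walkCost w '' {l | IsWalk E a t l}) :=
  ⟨0, fun x ⟨l, hl, hxl⟩ => hxl ▸ walkCost_nonneg hw l a t hua hl⟩

theorem gDist_le_walkCost {t a : V} (hw : ∀ a b, E a b → Reach E u a → 0 ≤ w a b)
    (hua : Reach E u a) {l : List V} (hl : IsWalk E a t l) :
    gDist E w a t ≤ walkCost w l :=
  csInf_le (gDist_bddBelow hw hua) ⟨l, hl, rfl⟩

theorem gDist_nonneg' {t a : V} (hw : ∀ a b, E a b → Reach E u a → 0 ≤ w a b)
    (hua : Reach E u a) : 0 ≤ gDist E w a t :=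
  Real.sInf_nonneg fun x => fun ⟨l, hl, hxl⟩ => hxl ▸ walkCost_nonneg hw l a t hua hl

theorem gDist_attained {t a : V} (hw : ∀ a b, E a b → Reach E u a → 0 ≤ w a b)
    (hua : Reach E u a) (hat : Reach E a t) :
    ∃ l, IsWalk E a t l ∧ l.Nodup ∧ walkCost w l = gDist E w a t := by
  set S : Set (List V) := {l | IsWalk E a t l ∧ l.Nodup} with hS
  have Sfin : S.Finite := nodup_lists_finite.subset fun l hl => hl.2
  have Sne : S.Nonempty := by
    obtain ⟨l0, hl0⟩ := hat
    obtain ⟨l', h1, h2, _⟩ := exists_nodup_walk hw hua hl0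
    exact ⟨l', h1, h2⟩
  obtain ⟨l₀, hl₀S, hmin⟩ := Set.exists_min_image S (walkCost w) Sfin Sne
  refine ⟨l₀, hl₀S.1, hl₀S.2, le_antisymm ?_ (gDist_le_walkCost hw hua hl₀S.1)⟩
  apply le_csInf
  · obtain ⟨l0, hl0⟩ := hat
    exact ⟨walkCost w l0, l0, hl0, rfl⟩
  · rintro b ⟨l, hl, rfl⟩
    obtain ⟨l', h1, h2, h3⟩ := exists_nodup_walk hw hua hl
    exact (hmin l' ⟨h1, h2⟩).trans h3

end Fin

theorem gDist_of_not_reach {a t : V} (w : V → V → ℝ) (h : ¬ Reach E a t) :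
    gDist E w a t = 0 := by
  have : {l | IsWalk E a t l} = (∅ : Set (List V)) := by
    ext l; simp only [Set.mem_setOf_eq, Set.mem_empty_iff_false, iff_false]
    exact fun hl => h ⟨l, hl⟩
  rw [gDist, this, Set.image_empty, Real.sInf_empty]

theorem gDist_junk (hE : ∀ a b, E a b → E b a) (hsymmw : ∀ a b, w a b = w b a)
    {a t p q : V} (hat : Reach E a t) (hpq : E p q) (hap : Reach E a p)
    (hneg : w p q < 0) : gDist E w a t = 0 := by
  have loop : ∀ k : ℕ, ∃ l, IsWalk E p p l ∧ walkCost w l = k * (2 * w p q) := by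
    intro k
    induction k with
    | zero => exact ⟨[p], ⟨rfl, rfl⟩, by simp [walkCost_single]⟩
    | succ k ihk =>
      obtain ⟨lk, hk, hc⟩ := ihk
      obtain ⟨lk', rfl⟩ := walk_exists_cons hk
      refine ⟨p :: q :: p :: lk', ⟨rfl, hpq, rfl, hE p q hpq, hk⟩, ?_⟩
      rw [walkCost_cons, walkCost_cons, hc, hsymmw q p]
      push_cast
      ring
  obtain ⟨l1, hl1⟩ := id hap
  obtain ⟨l3, hl3⟩ := Reach.symm hE hap
  obtain ⟨l4, hl4⟩ := hat
  have mem : ∀ k : ℕ, ∃ x ∈ walkCost w '' {l | IsWalk E a t l},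
      x = walkCost w l1 + k * (2 * w p q) + walkCost w l3 + walkCost w l4 := by
    intro k
    obtain ⟨lk, hlk, hck⟩ := loop k
    obtain ⟨m1, hm1, hcm1⟩ := walk_concat (w := w) hl1 hlk
    obtain ⟨m2, hm2, hcm2⟩ := walk_concat (w := w) hm1 hl3
    obtain ⟨m3, hm3, hcm3⟩ := walk_concat (w := w) hm2 hl4
    exact ⟨walkCost w m3, ⟨m3, hm3, rfl⟩, by rw [hcm3, hcm2, hcm1, hck]⟩
  have hnb : ¬ BddBelow (walkCost w '' {l | IsWalk E a t l}) := by
    rintro ⟨L, hL⟩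
    set C := walkCost w l1 + walkCost w l3 + walkCost w l4 with hC
    obtain ⟨k, hk⟩ := exists_nat_gt ((C - L) / (-(2 * w p q)))
    obtain ⟨x, hxmem, hxeq⟩ := mem k
    have hLx := hL hxmem
    have hpos : (0:ℝ) < -(2 * w p q) := by linarith
    rw [div_lt_iff₀ hpos] at hk
    have : x < L := by rw [hxeq]; linarith
    linarith [hLx]
  rw [gDist, Real.sInf_of_not_bddBelow hnb]

theorem gDist_mono {w w' : V → V → ℝ} {a t : V}
    (hw : ∀ a b, E a b → Reach E u a → 0 ≤ w a b) [Fintype V]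
    (hua : Reach E u a) (hle : ∀ a b, w a b ≤ w' a b) :
    gDist E w a t ≤ gDist E w' a t := by
  by_cases hat : Reach E a t
  · apply le_csInf
    · obtain ⟨l0, hl0⟩ := hat
      exact ⟨walkCost w' l0, l0, hl0, rfl⟩
    · rintro b ⟨l, hl, rfl⟩
      exact (gDist_le_walkCost hw hua hl).trans (walkCost_mono hle l)
  · rw [gDist_of_not_reach w hat, gDist_of_not_reach w' hat]

theorem gDist_upd_le [Fintype V] {g : Sym2 V → ℝ} {f : Sym2 V} {a t : V} {y : ℝ}
    (hw : ∀ a b, E a b → Reach E u a → 0 ≤ wt g a b)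
    (hw' : ∀ a b, E a b → Reach E u a → 0 ≤ wt (upd g f y) a b)
    (hua : Reach E u a) (hy : g f ≤ y) :
    gDist E (wt (upd g f y)) a t ≤ gDist E (wt g) a t + (y - g f) := by
  by_cases hat : Reach E a t
  · obtain ⟨l, hl, hnd, hcost⟩ := gDist_attained hw hua hat
    have h1 : gDist E (wt (upd g f y)) a t ≤ walkCost (wt (upd g f y)) l :=
      gDist_le_walkCost hw' hua hl
    rw [walkCost_wt_update] at h1
    have h2 : ((countF f l : ℝ)) ≤ 1 := by
      induction f using Sym2.ind with
      | _ p q => exact_mod_cast countF_le_one hnd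
    nlinarith [h1, hcost, h2, sub_nonneg.2 hy, Nat.cast_nonneg (α := ℝ) (countF f l)]
  · rw [gDist_of_not_reach _ hat, gDist_of_not_reach _ hat]
    linarith

/-! ### The key deterministic lemma -/

theorem key_main [Fintype V] {E : V → V → Prop} (hE : ∀ a b, E a b → E b a) (s t u v : V)
    (hsu : E s u) (hsv : E s v) (g : Sym2 V → ℝ) {y₁ y₂ : ℝ}
    (hrut : Reach E u t)
    (hnn : ∀ a b, E a b → Reach E u a → s(a, b) ≠ s(s, v) → 0 ≤ g s(a, b))
    (hxpos : 0 < g s(s, u))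
    (hy1 : 0 ≤ y₁) (hlt : y₁ < y₂)
    (tie1 : g s(s, u) + gDist E (wt (upd g s(s, v) y₁)) u t
          = y₁ + gDist E (wt (upd g s(s, v) y₁)) v t)
    (tie2 : g s(s, u) + gDist E (wt (upd g s(s, v) y₂)) u t
          = y₂ + gDist E (wt (upd g s(s, v) y₂)) v t) : False := by
  have hrus : Reach E u s := reach_of_edge (hE s u hsu)
  have hruu : Reach E u u := Reach.refl E u
  have hruv : Reach E u v := hrus.trans (reach_of_edge hsv)
  have hrvs : Reach E v s := reach_of_edge (hE s v hsv)
  have hrvu : Reach E v u := hrvs.trans (reach_of_edge hsu)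
  have hrvt : Reach E v t := hrvu.trans hrut
  set x := g s(s, u) with hxdef
  -- nonnegativity of updated weights
  have hw : ∀ y : ℝ, 0 ≤ y → ∀ a b, E a b → Reach E u a →
      0 ≤ wt (upd g s(s, v) y) a b := by
    intro y hy a b hab hra
    by_cases hf : s(a, b) = s(s, v)
    · rw [wt, hf, upd_same]; exact hy
    · rw [wt, upd_of_ne hf]; exact hnn a b hab hra hf
  have hptle : ∀ y y' : ℝ, y ≤ y' → ∀ a b,
      wt (upd g s(s, v) y) a b ≤ wt (upd g s(s, v) y') a b := by
    intro y y' hyy a b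
    by_cases hf : s(a, b) = s(s, v)
    · rw [wt, wt, hf, upd_same, upd_same]; exact hyy
    · rw [wt, wt, upd_of_ne hf, upd_of_ne hf]
  -- shorthand
  have hmono_u : ∀ y y' : ℝ, 0 ≤ y → y ≤ y' →
      gDist E (wt (upd g s(s, v) y)) u t ≤ gDist E (wt (upd g s(s, v) y')) u t :=
    fun y y' hy hyy => gDist_mono (hw y hy) hruu (hptle y y' hyy)
  have hmono_v : ∀ y y' : ℝ, 0 ≤ y → y ≤ y' →
      gDist E (wt (upd g s(s, v) y)) v t ≤ gDist E (wt (upd g s(s, v) y')) v t :=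
    fun y y' hy hyy => gDist_mono (hw y hy) hruv (hptle y y' hyy)
  have hlip_u : ∀ y y' : ℝ, 0 ≤ y → y ≤ y' →
      gDist E (wt (upd g s(s, v) y')) u t ≤ gDist E (wt (upd g s(s, v) y)) u t + (y' - y) := by
    intro y y' hy hyy
    have h0 : upd (upd g s(s, v) y) s(s, v) y' = upd g s(s, v) y' := upd_upd g s(s, v) y y'
    have h1 : (upd g s(s, v) y) s(s, v) = y := upd_same g s(s, v) y
    have := gDist_upd_le (u := u) (g := upd g s(s, v) y) (f := s(s, v)) (a := u) (t := t)
      (y := y') (hw y hy) (by rw [h0]; exact hw y' (hy.trans hyy)) hruu (by rw [h1]; exact hyy)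
    rw [h0, h1] at this
    exact this
  -- the tie function is constant on [y₁, y₂]
  have hFmono : ∀ y y' : ℝ, y₁ ≤ y → y ≤ y' → y' ≤ y₂ →
      y + gDist E (wt (upd g s(s, v) y)) v t - gDist E (wt (upd g s(s, v) y)) u t ≤
      y' + gDist E (wt (upd g s(s, v) y')) v t - gDist E (wt (upd g s(s, v) y')) u t := by
    intro y y' h1 h2 h3
    have hy : 0 ≤ y := hy1.trans h1
    have := hmono_v y y' hy h2
    have := hlip_u y y' hy h2
    linarith
  have hFconst : ∀ y : ℝ, y₁ ≤ y → y ≤ y₂ →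
      x + gDist E (wt (upd g s(s, v) y)) u t = y + gDist E (wt (upd g s(s, v) y)) v t := by
    intro y h1 h2
    have ha := hFmono y₁ y (le_refl y₁) h1 h2
    have hb := hFmono y y₂ h1 h2 (le_refl y₂)
    linarith
  have hslope : ∀ y : ℝ, y₁ ≤ y → y < y₂ →
      gDist E (wt (upd g s(s, v) y₂)) v t = gDist E (wt (upd g s(s, v) y)) v t ∧
      gDist E (wt (upd g s(s, v) y₂)) u t = gDist E (wt (upd g s(s, v) y)) u t + (y₂ - y) := by
    intro y h1 h2
    have hy : 0 ≤ y := hy1.trans h1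
    have hm := hmono_v y y₂ hy h2.le
    have hl := hlip_u y y₂ hy h2.le
    have hc1 := hFconst y h1 h2.le
    have hc2 := hFconst y₂ (h1.trans h2.le) (le_refl y₂)
    constructor <;> linarith
  -- for every y in [y₁, y₂), extract an f-free u-v walk of cost y - x
  have claim : ∀ y : ℝ, y₁ ≤ y → y < y₂ → ∃ l : List V, l.Nodup ∧ IsWalk E u v l ∧
      walkCost (wt (upd g s(s, v) y₁)) l = y - x := by
    intro y h1 h2
    have hy : 0 ≤ y := hy1.trans h1
    obtain ⟨Q, hQw, hQnd, hQc⟩ := gDist_attained (t := t) (hw y hy) hruu hrut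
    have hcount : countF (s(s, v)) Q = 1 := by
      have hle1 : countF (s(s, v)) Q ≤ 1 := countF_le_one hQnd
      rcases Nat.lt_or_ge (countF (s(s, v)) Q) 1 with h0 | hge
      · exfalso
        have h00 : countF (s(s, v)) Q = 0 := by omega
        have hupd : upd (upd g s(s, v) y) s(s, v) y₂ = upd g s(s, v) y₂ := upd_upd _ _ _ _
        have hcost2 : walkCost (wt (upd g s(s, v) y₂)) Q = walkCost (wt (upd g s(s, v) y)) Q := by
          rw [← hupd, walkCost_wt_update, h00]
          simp
        have hle : gDist E (wt (upd g s(s, v) y₂)) u t ≤ walkCost (wt (upd g s(s, v) y₂)) Q :=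
          gDist_le_walkCost (hw y₂ (hy.trans h2.le)) hruu hQw
        have hs := (hslope y h1 h2).2
        rw [hcost2, hQc] at hle
        linarith
      · omega
    obtain ⟨p, a, b, m, hQeq, hab, hpre, hsuf⟩ := countF_eq_one_decomp hcount
    subst hQeq
    have hsplit := (isWalk_append a p (b :: m)).1 hQw
    obtain ⟨hwua, hwat⟩ := hsplit
    rw [isWalk_cons] at hwat
    obtain ⟨-, hEab, hwbt⟩ := hwat
    have hcostQ : walkCost (wt (upd g s(s, v) y)) (p ++ a :: b :: m)
        = walkCost (wt (upd g s(s, v) y)) (p ++ [a]) + (y + walkCost (wt (upd g s(s, v) y)) (b :: m)) := by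
      rw [walkCost_append _ a p (b :: m), walkCost_cons]
      have : wt (upd g s(s, v) y) a b = y := by rw [wt, hab, upd_same]
      rw [this]
    have hFy := hFconst y h1 h2.le
    rw [hcostQ] at hQc
    rcases Sym2.eq_iff.1 hab with ⟨ha, hb⟩ | ⟨ha, hb⟩
    · -- a = s, b = v : impossible since x > 0
      exfalso
      rw [ha] at hwua hQc
      rw [hb] at hwbt hQc
      have hc1 : 0 ≤ walkCost (wt (upd g s(s, v) y)) (p ++ [s]) :=
        walkCost_nonneg (hw y hy) _ u s hruu hwua
      have hc2 : gDist E (wt (upd g s(s, v) y)) v t ≤ walkCost (wt (upd g s(s, v) y)) (v :: m) :=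
        gDist_le_walkCost (hw y hy) hruv hwbt
      linarith
    · -- a = v, b = s : the walk to v is the witness
      rw [ha] at hwua hQc hpre hQnd
      rw [hb] at hwbt hQc hQnd
      have hdvle : gDist E (wt (upd g s(s, v) y)) v t
          ≤ y + walkCost (wt (upd g s(s, v) y)) (s :: m) := by
        have hwvt : IsWalk E v t (v :: s :: m) := ⟨rfl, hE s v hsv, hwbt⟩
        have hle := gDist_le_walkCost (hw y hy) hruv hwvt
        rw [walkCost_cons] at hle
        have hvs : wt (upd g s(s, v) y) v s = y := by
          rw [wt, Sym2.eq_swap, upd_same]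
        rw [hvs] at hle
        exact hle
      have hdule : gDist E (wt (upd g s(s, v) y)) u t
          ≤ walkCost (wt (upd g s(s, v) y)) (p ++ [v]) + gDist E (wt (upd g s(s, v) y)) v t := by
        obtain ⟨R, hRw, -, hRc⟩ := gDist_attained (t := t) (hw y hy) hruv hrvt
        obtain ⟨r, rfl⟩ := walk_exists_cons hRw
        have hconc : IsWalk E u t (p ++ v :: r) := (isWalk_append v p r).2 ⟨hwua, hRw⟩
        have hle := gDist_le_walkCost (hw y hy) hruu hconc
        rw [walkCost_append _ v p r] at hle
        rw [← hRc]
        exact hle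
      have hyeq : y = x + walkCost (wt (upd g s(s, v) y)) (p ++ [v]) := by linarith
      have hcost_inv : walkCost (wt (upd g s(s, v) y)) (p ++ [v])
          = walkCost (wt (upd g s(s, v) y₁)) (p ++ [v]) := by
        have hupd : upd (upd g s(s, v) y₁) s(s, v) y = upd g s(s, v) y := upd_upd _ _ _ _
        rw [← hupd, walkCost_wt_update, hpre]
        simp
      have hndpv : (p ++ [v]).Nodup := by
        have hsub : List.Sublist (p ++ [v]) (p ++ v :: s :: m) :=
          List.Sublist.append_left (List.cons_sublist_cons.2 (List.nil_sublist _)) p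
        exact hQnd.sublist hsub
      exact ⟨p ++ [v], hndpv, hwua, by rw [← hcost_inv]; linarith⟩
  -- injectivity gives an injection of an infinite set into a finite set
  classical
  let Φ : ℝ → List V := fun y =>
    if h : y₁ ≤ y ∧ y < y₂ then (claim y h.1 h.2).choose else ([])
  have hΦ : ∀ y ∈ Set.Ico y₁ y₂, (Φ y).Nodup ∧ IsWalk E u v (Φ y) ∧
      walkCost (wt (upd g s(s, v) y₁)) (Φ y) = y - x := by
    intro y hy
    obtain ⟨h1, h2⟩ := hy
    simp only [Φ, dif_pos (And.intro h1 h2)]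
    exact (claim y h1 h2).choose_spec
  have hinj : Set.InjOn Φ (Set.Ico y₁ y₂) := by
    intro y hy y' hy' heq
    have h1 := (hΦ y hy).2.2
    have h2 := (hΦ y' hy').2.2
    rw [heq] at h1
    linarith
  have hfin : (Set.Ico y₁ y₂).Finite := by
    apply Set.Finite.of_finite_image _ hinj
    apply nodup_lists_finite.subset
    rintro l ⟨y, hy, rfl⟩
    exact (hΦ y hy).1
  exact Set.Ico_infinite hlt hfin

theorem key [Fintype V] {E : V → V → Prop} (hE : ∀ a b, E a b → E b a) (s t u v : V)
    (hsu : E s u) (hsv : E s v) (huv : u ≠ v) (g g' : Sym2 V → ℝ)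
    (hagree : ∀ i, i ≠ s(s, v) → g i = g' i) (hx : g s(s, u) ≠ 0)
    (tie1 : g s(s, u) + gDist E (wt g) u t = g s(s, v) + gDist E (wt g) v t)
    (tie2 : g' s(s, u) + gDist E (wt g') u t = g' s(s, v) + gDist E (wt g') v t) :
    g s(s, v) = g' s(s, v) := by
  have hef : s(s, u) ≠ s(s, v) := by
    intro h
    rcases Sym2.eq_iff.1 h with ⟨-, h2⟩ | ⟨h1, h2⟩
    · exact huv h2
    · exact huv (h2.trans h1)
  have hge : g' s(s, u) = g s(s, u) := (hagree _ hef).symm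
  have hrus : Reach E u s := reach_of_edge (hE s u hsu)
  have hruv : Reach E u v := hrus.trans (reach_of_edge hsv)
  have hrvs : Reach E v s := reach_of_edge (hE s v hsv)
  have hrvu : Reach E v u := hrvs.trans (reach_of_edge hsu)
  have hsymw : ∀ (gg : Sym2 V → ℝ) a b, wt gg a b = wt gg b a := by
    intro gg a b; rw [wt, wt, Sym2.eq_swap]
  by_cases hrut : Reach E u t
  · rcases lt_trichotomy (g s(s, u)) 0 with hxneg | hx0 | hxpos
    · -- the edge (s,u) itself is negative: everything junk
      have hj1 : gDist E (wt g) u t = 0 :=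
        gDist_junk hE (hsymw g) hrut hsu hrus (by rw [wt]; exact hxneg)
      have hj2 : gDist E (wt g) v t = 0 :=
        gDist_junk hE (hsymw g) (hrvu.trans hrut) hsu hrvs (by rw [wt]; exact hxneg)
      have hj3 : gDist E (wt g') u t = 0 :=
        gDist_junk hE (hsymw g') hrut hsu hrus (by rw [wt]; rw [← hagree _ hef]; exact hxneg)
      have hj4 : gDist E (wt g') v t = 0 :=
        gDist_junk hE (hsymw g') (hrvu.trans hrut) hsu hrvs
          (by rw [wt]; rw [← hagree _ hef]; exact hxneg)
      rw [hj1, hj2] at tie1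
      rw [hj3, hj4, hge] at tie2
      linarith
    · exact absurd hx0 hx
    · by_cases hnegother : ∃ a b, E a b ∧ Reach E u a ∧ s(a, b) ≠ s(s, v) ∧ g s(a, b) < 0
      · obtain ⟨a, b, hab, hra, hfne, hneg⟩ := hnegother
        have hj1 : gDist E (wt g) u t = 0 :=
          gDist_junk hE (hsymw g) hrut hab hra (by rw [wt]; exact hneg)
        have hj2 : gDist E (wt g) v t = 0 :=
          gDist_junk hE (hsymw g) (hrvu.trans hrut) hab (hrvu.trans hra) (by rw [wt]; exact hneg)
        have hj3 : gDist E (wt g') u t = 0 :=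
          gDist_junk hE (hsymw g') hrut hab hra (by rw [wt, ← hagree _ hfne]; exact hneg)
        have hj4 : gDist E (wt g') v t = 0 :=
          gDist_junk hE (hsymw g') (hrvu.trans hrut) hab (hrvu.trans hra)
            (by rw [wt, ← hagree _ hfne]; exact hneg)
        rw [hj1, hj2] at tie1
        rw [hj3, hj4, hge] at tie2
        linarith
      · push_neg at hnegother
        have hy1nn : 0 ≤ g s(s, v) := by
          by_contra hneg
          push_neg at hneg
          have hj1 : gDist E (wt g) u t = 0 :=
            gDist_junk hE (hsymw g) hrut hsv hrus (by rw [wt]; exact hneg)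
          have hj2 : gDist E (wt g) v t = 0 :=
            gDist_junk hE (hsymw g) (hrvu.trans hrut) hsv hrvs (by rw [wt]; exact hneg)
          rw [hj1, hj2] at tie1
          linarith
        have hy2nn : 0 ≤ g' s(s, v) := by
          by_contra hneg
          push_neg at hneg
          have hj3 : gDist E (wt g') u t = 0 :=
            gDist_junk hE (hsymw g') hrut hsv hrus (by rw [wt]; exact hneg)
          have hj4 : gDist E (wt g') v t = 0 :=
            gDist_junk hE (hsymw g') (hrvu.trans hrut) hsv hrvs (by rw [wt]; exact hneg)
          rw [hj3, hj4, hge] at tie2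
          linarith
        have hupd1 : upd g s(s, v) (g s(s, v)) = g := upd_self g s(s, v)
        have hupd2 : upd g s(s, v) (g' s(s, v)) = g' := by
          funext i
          by_cases hif : i = s(s, v)
          · subst hif; rw [upd_same]
          · rw [upd_of_ne hif, hagree i hif]
        have hupd3 : upd g' s(s, v) (g' s(s, v)) = g' := upd_self g' s(s, v)
        have hupd4 : upd g' s(s, v) (g s(s, v)) = g := by
          funext i
          by_cases hif : i = s(s, v)
          · subst hif; rw [upd_same]
          · rw [upd_of_ne hif, hagree i hif]
        have hnn' : ∀ a b, E a b → Reach E u a → s(a, b) ≠ s(s, v) → 0 ≤ g' s(a, b) := by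
          intro a b hab hra hfne
          rw [← hagree _ hfne]
          exact hnegother a b hab hra hfne
        rcases lt_trichotomy (g s(s, v)) (g' s(s, v)) with h | h | h
        · exact absurd (key_main hE s t u v hsu hsv g hrut hnegother hxpos hy1nn h
            (by rw [hupd1]; exact tie1) (by rw [hupd2]; rw [hge] at tie2; exact tie2)) id
        · exact h
        · exfalso
          have hxpos' : 0 < g' s(s, u) := by rw [hge]; exact hxpos
          exact key_main hE s t u v hsu hsv g' hrut hnn' hxpos' hy2nn h
            (by rw [hupd3]; exact tie2) (by rw [hupd4, hge]; exact tie1)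
  · have hrvtno : ¬ Reach E v t := fun h => hrut (hruv.trans h)
    rw [gDist_of_not_reach _ hrut, gDist_of_not_reach _ hrvtno] at tie1 tie2
    rw [hge] at tie2
    linarith

/-! ### Measurability -/

theorem real_sInf_range_eq {ι : Sort*} (h : ι → ℝ) :
    sInf (Set.range h) = (⨅ i, (h i : EReal)).toReal := by
  rcases isEmpty_or_nonempty ι with hι | hι
  · rw [Set.range_eq_empty, Real.sInf_empty, iInf_of_empty, EReal.toReal_top]
  · by_cases hbdd : BddBelow (Set.range h)
    · have hco : (⨅ i, (h i : EReal)) = ((sInf (Set.range h) : ℝ) : EReal) := by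
        apply le_antisymm
        · set b := ⨅ i, (h i : EReal) with hb
          have hble : ∀ i, b ≤ (h i : EReal) := fun i => iInf_le _ i
          by_cases hbot : b = ⊥
          · rw [hbot]; exact bot_le
          · have hbtop : b ≠ ⊤ := by
              obtain ⟨i⟩ := hι
              intro htop
              exact (EReal.coe_lt_top (h i)).not_ge (htop ▸ hble i)
            have hbr : ((b.toReal : ℝ) : EReal) = b := EReal.coe_toReal hbtop hbot
            rw [← hbr]
            apply EReal.coe_le_coe_iff.2
            apply le_csInf ⟨h (Classical.arbitrary ι), Set.mem_range_self _⟩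
            rintro x ⟨i, rfl⟩
            have h2 := hble i
            rw [← hbr] at h2
            exact_mod_cast h2
        · exact le_iInf fun i => EReal.coe_le_coe_iff.2 (csInf_le hbdd (Set.mem_range_self i))
      rw [hco, EReal.toReal_coe]
    · rw [Real.sInf_of_not_bddBelow hbdd]
      have hbot : (⨅ i, (h i : EReal)) = ⊥ := by
        by_contra hb
        set b := ⨅ i, (h i : EReal) with hbdef
        have hble : ∀ i, b ≤ (h i : EReal) := fun i => iInf_le _ i
        have hbtop : b ≠ ⊤ := by
          obtain ⟨i⟩ := hι
          intro htop
          exact (EReal.coe_lt_top (h i)).not_ge (htop ▸ hble i)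
        have hbr : ((b.toReal : ℝ) : EReal) = b := EReal.coe_toReal hbtop hb
        apply hbdd
        refine ⟨b.toReal, ?_⟩
        rintro x ⟨i, rfl⟩
        have h2 := hble i
        rw [← hbr] at h2
        exact_mod_cast h2
      rw [hbot, EReal.toReal_bot]

theorem measurable_walkCost (l : List V) :
    Measurable fun g : Sym2 V → ℝ => walkCost (wt g) l := by
  induction l with
  | nil => simp only [walkCost_nil]; exact measurable_const
  | cons a l' ih =>
    cases l' with
    | nil => simp only [walkCost_single]; exact measurable_const
    | cons b r =>
      simp only [walkCost_cons]
      exact (measurable_pi_apply s(a, b)).add ih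

theorem measurable_gDist [Fintype V] (E : V → V → Prop) (a t : V) :
    Measurable fun g : Sym2 V → ℝ => gDist E (wt g) a t := by
  have hrw : (fun g : Sym2 V → ℝ => gDist E (wt g) a t)
      = fun g : Sym2 V → ℝ =>
        (⨅ l : {l : List V // IsWalk E a t l}, (walkCost (wt g) l.1 : EReal)).toReal := by
    funext g
    rw [gDist, Set.image_eq_range, real_sInf_range_eq]
    rfl
  rw [hrw]
  have : Countable {l : List V // IsWalk E a t l} := by
    have : Countable (List V) := inferInstance
    exact Subtype.countable
  exact measurable_ereal_toReal.comp
    (Measurable.iInf fun l => measurable_coe_real_ereal.comp (measurable_walkCost l.1))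

/-! ### Per-tuple probability bound -/

theorem tuple_bound {V : Type*} [Fintype V] {Ω : Type*} [MeasurableSpace Ω]
    (μ : Measure Ω) [IsProbabilityMeasure μ] (E : V → V → Prop) (hE : ∀ a b, E a b → E b a)
    (W : Sym2 V → Ω → ℝ) (hmeas : ∀ e, Measurable (W e))
    (hindep : iIndepFun W μ)
    (s t u v : V) (hsu : E s u) (hsv : E s v) (huv : u ≠ v)
    (c : ENNReal) (hmassf : ∀ x : ℝ, μ {ω | W s(s, v) ω = x} ≤ c) :
    μ {ω | (W s(s, u) ω + gDist E (fun a b => W s(a, b) ω) u t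
        = W s(s, v) ω + gDist E (fun a b => W s(a, b) ω) v t) ∧ W s(s, u) ω ≠ 0} ≤ c := by
  classical
  have hef : s(s, u) ≠ s(s, v) := by
    intro h
    rcases Sym2.eq_iff.1 h with ⟨-, h2⟩ | ⟨h1, h2⟩
    · exact huv h2
    · exact huv (h2.trans h1)
  set X : Ω → ({i : Sym2 V // i ≠ s(s, v)} → ℝ) := fun ω i => W i.1 ω with hXdef
  set Y : Ω → ℝ := W s(s, v) with hYdef
  have hX : Measurable X := measurable_pi_lambda _ fun i => hmeas i.1
  have hY : Measurable Y := hmeas _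
  -- independence of X and Y
  have hIndep : IndepFun X Y μ := by
    have hdisj : Disjoint (Finset.univ.filter (· ≠ s(s, v))) ({s(s, v)} : Finset (Sym2 V)) := by
      simp [Finset.disjoint_singleton_right]
    have h2 := hindep.indepFun_finset (Finset.univ.filter (· ≠ s(s, v)))
      ({s(s, v)} : Finset (Sym2 V)) hdisj hmeas
    have hφ : Measurable (fun p : (↑(Finset.univ.filter (· ≠ s(s, v))) : Type _) → ℝ =>
        (fun i : {i : Sym2 V // i ≠ s(s, v)} =>
          p ⟨i.1, by simp [Finset.mem_filter, i.2]⟩)) :=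
      measurable_pi_lambda _ fun i => measurable_pi_apply _
    have hψ : Measurable (fun p : (↑({s(s, v)} : Finset (Sym2 V)) : Type _) → ℝ =>
        p ⟨s(s, v), Finset.mem_singleton_self _⟩) := measurable_pi_apply _
    exact h2.comp hφ hψ
  -- combining map
  set C : ({i : Sym2 V // i ≠ s(s, v)} → ℝ) × ℝ → (Sym2 V → ℝ) :=
    fun p i => if h : i = s(s, v) then p.2 else p.1 ⟨i, h⟩ with hCdef
  have hC : Measurable C := by
    refine measurable_pi_lambda _ fun i => ?_
    by_cases h : i = s(s, v)
    · simp only [hCdef, dif_pos h]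
      exact measurable_snd
    · simp only [hCdef, dif_neg h]
      exact (measurable_pi_apply _).comp measurable_fst
  have hCW : ∀ ω : Ω, C (X ω, Y ω) = fun i => W i ω := by
    intro ω
    funext i
    by_cases h : i = s(s, v)
    · subst h; simp [hCdef, hYdef]
    · simp [hCdef, h, hXdef]
  set B : Set (({i : Sym2 V // i ≠ s(s, v)} → ℝ) × ℝ) :=
    {p | (C p s(s, u) + gDist E (wt (C p)) u t = C p s(s, v) + gDist E (wt (C p)) v t) ∧
      C p s(s, u) ≠ 0} with hBdef
  have hB : MeasurableSet B := by
    have h1 : Measurable fun p : ({i : Sym2 V // i ≠ s(s, v)} → ℝ) × ℝ =>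
        C p s(s, u) + gDist E (wt (C p)) u t :=
      ((measurable_pi_apply s(s, u)).comp hC).add ((measurable_gDist E u t).comp hC)
    have h2 : Measurable fun p : ({i : Sym2 V // i ≠ s(s, v)} → ℝ) × ℝ =>
        C p s(s, v) + gDist E (wt (C p)) v t :=
      ((measurable_pi_apply s(s, v)).comp hC).add ((measurable_gDist E v t).comp hC)
    have h3 : MeasurableSet {p : ({i : Sym2 V // i ≠ s(s, v)} → ℝ) × ℝ |
        C p s(s, u) + gDist E (wt (C p)) u t = C p s(s, v) + gDist E (wt (C p)) v t} :=
      measurableSet_eq_fun h1 h2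
    have h4 : MeasurableSet {p : ({i : Sym2 V // i ≠ s(s, v)} → ℝ) × ℝ | C p s(s, u) = 0} :=
      ((measurable_pi_apply s(s, u)).comp hC) (measurableSet_singleton 0)
    exact h3.inter h4.compl
  have hpre : {ω | (W s(s, u) ω + gDist E (fun a b => W s(a, b) ω) u t
      = W s(s, v) ω + gDist E (fun a b => W s(a, b) ω) v t) ∧ W s(s, u) ω ≠ 0}
      = (fun ω => (X ω, Y ω)) ⁻¹' B := by
    ext ω
    simp only [Set.mem_setOf_eq, Set.mem_preimage, hBdef, hCW ω]
    exact Iff.rfl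
  rw [hpre, ← Measure.map_apply (hX.prodMk hY) hB,
    (indepFun_iff_map_prod_eq_prod_map_map hX.aemeasurable hY.aemeasurable).1 hIndep,
    Measure.prod_apply hB]
  have hpoint : ∀ x : {i : Sym2 V // i ≠ s(s, v)} → ℝ,
      (μ.map Y) (Prod.mk x ⁻¹' B) ≤ c := by
    intro x
    have hsub : (Prod.mk x ⁻¹' B).Subsingleton := by
      intro y1 m1 y2 m2
      simp only [Set.mem_preimage, hBdef, Set.mem_setOf_eq] at m1 m2
      have hagr : ∀ i, i ≠ s(s, v) → C (x, y1) i = C (x, y2) i := by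
        intro i hi
        simp [hCdef, hi]
      have hkey := key hE s t u v hsu hsv huv (C (x, y1)) (C (x, y2)) hagr m1.2 m1.1 m2.1
      simpa [hCdef] using hkey
    rcases hsub.eq_empty_or_singleton with h0 | ⟨z, hz⟩
    · rw [h0]; simp
    · rw [hz, Measure.map_apply hY (measurableSet_singleton z)]
      exact hmassf z
  calc ∫⁻ x, (μ.map Y) (Prod.mk x ⁻¹' B) ∂(μ.map X)
      ≤ ∫⁻ _, c ∂(μ.map X) := lintegral_mono hpoint
    _ = c * (μ.map X) Set.univ := lintegral_const c
    _ ≤ c := by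
        have : IsProbabilityMeasure (μ.map X) := Measure.isProbabilityMeasure_map hX.aemeasurable
        rw [measure_univ, mul_one]

end USP


open USP

/-- Union bound for unique shortest paths with random edge weights: if the (independent)
edge weights each have point masses at most `n⁻⁵`, then with probability at least `1 − 1/n`,
no tie `w(s,u) + dist(u,t) = w(s,v) + dist(v,t)` occurs for distinct neighbors `u, v` of `s`. -/
theorem unique_shortest_path_whp {V : Type*} [Fintype V] (n : ℕ) (hn : 1 ≤ n)
    (hcard : Fintype.card V = n)
    (E : V → V → Prop) (hEsymm : ∀ u v, E u v → E v u)
    {Ω : Type*} [MeasurableSpace Ω] (μ : Measure Ω) [IsProbabilityMeasure μ]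
    (W : Sym2 V → Ω → ℝ)
    (hmeas : ∀ e, Measurable (W e))
    (hindep : iIndepFun W μ)
    (hmass : ∀ u v : V, E u v → ∀ c : ℝ, μ {ω | W s(u, v) ω = c} ≤ (1 : ENNReal) / n ^ 5) :
    1 - (1 : ENNReal) / n ≤
      μ {ω | ∀ s t u v : V, E s u → E s v → u ≠ v →
        W s(s, u) ω + gDist E (fun a b => W s(a, b) ω) u t ≠
        W s(s, v) ω + gDist E (fun a b => W s(a, b) ω) v t} := by
  classical
  set c : ENNReal := (1 : ENNReal) / n ^ 5 with hc
  set G : Set Ω := {ω | ∀ s t u v : V, E s u → E s v → u ≠ v →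
      W s(s, u) ω + gDist E (fun a b => W s(a, b) ω) u t ≠
      W s(s, v) ω + gDist E (fun a b => W s(a, b) ω) v t} with hG
  set A : V × V × V × V → Set Ω := fun q =>
    {ω | E q.1 q.2.2.1 ∧ E q.1 q.2.2.2 ∧ q.2.2.1 ≠ q.2.2.2 ∧
      (W s(q.1, q.2.2.1) ω + gDist E (fun a b => W s(a, b) ω) q.2.2.1 q.2.1
        = W s(q.1, q.2.2.2) ω + gDist E (fun a b => W s(a, b) ω) q.2.2.2 q.2.1) ∧
      W s(q.1, q.2.2.1) ω ≠ 0} with hA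
  set Z : V × V → Set Ω := fun q => {ω | E q.1 q.2 ∧ W s(q.1, q.2) ω = 0} with hZ
  -- covering
  have hcover : (Set.univ : Set Ω) ⊆ G ∪ ((⋃ q, A q) ∪ (⋃ q, Z q)) := by
    intro ω _
    by_cases hGm : ω ∈ G
    · exact Or.inl hGm
    · right
      rw [hG, Set.mem_setOf_eq] at hGm
      push_neg at hGm
      obtain ⟨s, t, u, v, hsu, hsv, huv, heq⟩ := hGm
      by_cases h0 : W s(s, u) ω = 0
      · exact Or.inr (Set.mem_iUnion.2 ⟨(s, u), hsu, h0⟩)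
      · exact Or.inl (Set.mem_iUnion.2 ⟨(s, t, u, v), hsu, hsv, huv, heq, h0⟩)
  -- per-tuple bounds
  have hAbound : ∀ q : V × V × V × V,
      μ (A q) ≤ (if q.2.2.1 = q.2.2.2 then 0 else c) := by
    rintro ⟨s, t, u, v⟩
    by_cases huv : u = v
    · rw [if_pos huv]
      have : A (s, t, u, v) = ∅ := by
        ext ω
        simp only [hA, Set.mem_setOf_eq, Set.mem_empty_iff_false, iff_false]
        rintro ⟨-, -, hne, -⟩
        exact hne huv
      rw [this]
      simp
    · rw [if_neg huv]
      by_cases hsu : E s u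
      · by_cases hsv : E s v
        · refine le_trans (measure_mono ?_)
            (tuple_bound μ E hEsymm W hmeas hindep s t u v hsu hsv huv c
              (fun x => hmass s v hsv x))
          rintro ω ⟨-, -, -, h4, h5⟩
          exact ⟨h4, h5⟩
        · have : A (s, t, u, v) = ∅ := by
            ext ω
            simp only [hA, Set.mem_setOf_eq, Set.mem_empty_iff_false, iff_false]
            rintro ⟨-, h2, -⟩
            exact hsv h2
          rw [this]; simp
      · have : A (s, t, u, v) = ∅ := by
          ext ω
          simp only [hA, Set.mem_setOf_eq, Set.mem_empty_iff_false, iff_false]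
          rintro ⟨h1, -⟩
          exact hsu h1
        rw [this]; simp
  have hZbound : ∀ q : V × V, μ (Z q) ≤ c := by
    rintro ⟨a, b⟩
    by_cases hab : E a b
    · refine le_trans (measure_mono ?_) (hmass a b hab 0)
      rintro ω ⟨-, h2⟩
      exact h2
    · have : Z (a, b) = ∅ := by
        ext ω
        simp only [hZ, Set.mem_setOf_eq, Set.mem_empty_iff_false, iff_false]
        rintro ⟨h1, -⟩
        exact hab h1
      rw [this]; simp
  -- summation
  have hinner : ∀ u : V, (∑ v : V, if u = v then (0 : ENNReal) else c) = (n - 1) • c := by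
    intro u
    rw [← Finset.add_sum_erase _ _ (Finset.mem_univ u), if_pos rfl, zero_add,
      Finset.sum_congr rfl (fun v hv => if_neg fun h => (Finset.mem_erase.1 hv).1 h.symm),
      Finset.sum_const, Finset.card_erase_of_mem (Finset.mem_univ u), Finset.card_univ, hcard]
  have hsumA : ∑' q : V × V × V × V, μ (A q) ≤ ((n * (n * (n * (n - 1))) : ℕ)) • c := by
    rw [tsum_fintype]
    refine le_trans (Finset.sum_le_sum fun q _ => hAbound q) (le_of_eq ?_)
    simp only [Fintype.sum_prod_type]
    calc (∑ s : V, ∑ t : V, ∑ u : V, ∑ v : V, if u = v then (0 : ENNReal) else c)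
        = ∑ s : V, ∑ t : V, ∑ u : V, (n - 1) • c := by
          refine Finset.sum_congr rfl fun s _ => Finset.sum_congr rfl fun t _ =>
            Finset.sum_congr rfl fun u _ => hinner u
      _ = ((n * (n * (n * (n - 1)))) : ℕ) • c := by
          rw [Finset.sum_const, Finset.sum_const, Finset.sum_const, Finset.card_univ, hcard,
            smul_smul, smul_smul, smul_smul]
          congr 1
          ring
  have hsumZ : ∑' q : V × V, μ (Z q) ≤ ((n * n : ℕ)) • c := by
    rw [tsum_fintype]
    refine le_trans (Finset.sum_le_sum fun q _ => hZbound q) (le_of_eq ?_)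
    rw [Finset.sum_const, Finset.card_univ, Fintype.card_prod, hcard]
  -- numeric bound
  have hnat : n * (n * (n * (n - 1))) + n * n ≤ n ^ 4 := by
    obtain ⟨m, rfl⟩ : ∃ m, n = m + 1 := ⟨n - 1, (Nat.succ_pred_eq_of_pos hn).symm⟩
    simp only [Nat.add_sub_cancel]
    nlinarith [Nat.zero_le m, Nat.zero_le ((m + 1) * (m + 1) * m)]
  have hfour : ((n ^ 4 : ℕ) : ENNReal) * c = 1 / n := by
    have hN0 : ((n : ENNReal)) ≠ 0 := by
      simp only [ne_eq, Nat.cast_eq_zero]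
      omega
    have hNtop : ((n : ENNReal)) ≠ ⊤ := ENNReal.natCast_ne_top n
    rw [hc, one_div, one_div, Nat.cast_pow]
    have h5 : ((n : ENNReal)) ^ 5 = (n : ENNReal) ^ 4 * n := by ring
    rw [h5, ENNReal.mul_inv (Or.inl (pow_ne_zero 4 hN0)) (Or.inl (ENNReal.pow_ne_top hNtop)),
      ← mul_assoc, ENNReal.mul_inv_cancel (pow_ne_zero 4 hN0) (ENNReal.pow_ne_top hNtop),
      one_mul]
  have hbad : μ ((⋃ q, A q) ∪ (⋃ q, Z q)) ≤ 1 / n := by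
    refine le_trans (measure_union_le _ _) ?_
    refine le_trans (add_le_add (le_trans (measure_iUnion_le _) hsumA)
      (le_trans (measure_iUnion_le _) hsumZ)) ?_
    rw [nsmul_eq_mul, nsmul_eq_mul, ← add_mul, ← Nat.cast_add]
    refine le_trans (mul_le_mul_left (Nat.cast_le.2 hnat) c) (le_of_eq hfour)
  -- conclude
  have h1 : (1 : ENNReal) ≤ μ G + μ ((⋃ q, A q) ∪ (⋃ q, Z q)) := by
    calc (1 : ENNReal) = μ Set.univ := (measure_univ).symm
      _ ≤ μ (G ∪ ((⋃ q, A q) ∪ (⋃ q, Z q))) := measure_mono hcover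
      _ ≤ μ G + μ ((⋃ q, A q) ∪ (⋃ q, Z q)) := measure_union_le _ _
  rw [tsub_le_iff_right]
  exact le_trans h1 (add_le_add_right hbad _)
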